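/- arXiv:2301.13643 — 3 statements merged into one kernel-verified Lean document; each statement's English description precedes it below -/
import Mathlib

section
/- Let d \ge 1 be an integer, a \in \mathbb{C}, and \mu > -1/2. Then the inversion formula for the generalized Gould–Hopper polynomials holds: for all n \in \mathbb{N} and all x, x^n / \gamma_\mu(n) = \sum_{k=0}^{\lfloor n/(d+1) \rfloor} ((-a)^k / (k! (n-(d+1)k)!)) \, Q_{n-(d+1)k}^{(d+1)}(x, a, \mu). -/
open Finset

/-- The Dunkl generalized factorial: `γ_μ(2p+ε) = 2^(2p+ε) p! (μ+1/2)_{p+ε}`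
for `ε ∈ {0,1}`. -/
noncomputable def dunklGamma (μ : ℝ) (n : ℕ) : ℝ :=
  2 ^ n * (Nat.factorial (n / 2) : ℝ) *
    ∏ i ∈ Finset.range (n / 2 + n % 2), (μ + 1 / 2 + i)

/-- The generalized Gould–Hopper polynomial
`Q_n^{(d+1)}(x,a,μ) = n! ∑_{k=0}^{⌊n/(d+1)⌋} a^k x^{n-(d+1)k} / (k! γ_μ(n-(d+1)k))`. -/
noncomputable def gghQ (d : ℕ) (a : ℂ) (μ : ℝ) (n : ℕ) (x : ℂ) : ℂ :=
  (Nat.factorial n : ℂ) *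
    ∑ k ∈ Finset.range (n / (d + 1) + 1),
      a ^ k * x ^ (n - (d + 1) * k) /
        ((Nat.factorial k : ℂ) * ((dunklGamma μ (n - (d + 1) * k) : ℝ) : ℂ))

lemma dunklGamma_pos (μ : ℝ) (hμ : -(1/2) < μ) (n : ℕ) : 0 < dunklGamma μ n := by
  unfold dunklGamma
  apply mul_pos
  · positivity
  · apply Finset.prod_pos
    intro i _
    have : (0:ℝ) ≤ i := Nat.cast_nonneg i
    linarith

lemma binom_sum' (a : ℂ) (m : ℕ) :
    ∑ k ∈ range (m+1), (-a)^k * a^(m-k) /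
      ((Nat.factorial k : ℂ) * (Nat.factorial (m-k) : ℂ)) =
      if m = 0 then 1 else 0 := by
  have h := add_pow (-a) a m
  rw [neg_add_cancel, zero_pow_eq] at h
  have hm : (Nat.factorial m : ℂ) ≠ 0 := Nat.cast_ne_zero.2 m.factorial_ne_zero
  have key : ∀ k ∈ range (m+1),
      (-a)^k * a^(m-k) / ((Nat.factorial k : ℂ) * (Nat.factorial (m-k) : ℂ))
        = (-a)^k * a^(m-k) * (Nat.choose m k : ℂ) / (Nat.factorial m : ℂ) := by
    intro k hk
    have hk' : k ≤ m := Nat.lt_succ_iff.mp (mem_range.mp hk)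
    rw [Nat.cast_choose ℂ hk']
    have h1 : (Nat.factorial k : ℂ) ≠ 0 := Nat.cast_ne_zero.2 k.factorial_ne_zero
    have h2 : (Nat.factorial (m-k) : ℂ) ≠ 0 := Nat.cast_ne_zero.2 (m-k).factorial_ne_zero
    field_simp
  rw [Finset.sum_congr rfl key, ← Finset.sum_div, ← h]
  split_ifs with h0
  · subst h0; simp
  · simp

lemma sum_triangle' {M : Type*} [AddCommMonoid M] (N : ℕ) (f : ℕ → ℕ → M) :
    ∑ k ∈ range (N+1), ∑ j ∈ range (N - k + 1), f k j =
      ∑ m ∈ range (N+1), ∑ k ∈ range (m+1), f k (m-k) := by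
  rw [Finset.sum_sigma' (range (N+1)) (fun k => range (N - k + 1)) (fun k j => f k j),
    Finset.sum_sigma' (range (N+1)) (fun m => range (m+1)) (fun m k => f k (m-k))]
  apply Finset.sum_nbij' (fun p => ⟨p.1 + p.2, p.1⟩) (fun q => ⟨q.2, q.1 - q.2⟩)
  · rintro ⟨k, j⟩ hp
    simp only [Finset.mem_sigma, mem_range, Nat.lt_succ_iff] at hp ⊢
    omega
  · rintro ⟨m, k⟩ hq
    simp only [Finset.mem_sigma, mem_range, Nat.lt_succ_iff] at hq ⊢
    omega
  · rintro ⟨k, j⟩ hp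
    simp
  · rintro ⟨m, k⟩ hq
    simp only [Finset.mem_sigma, mem_range, Nat.lt_succ_iff] at hq
    have h : k + (m - k) = m := by omega
    simp [h]
  · rintro ⟨k, j⟩ hp
    simp

/-- inversion formula for the generalized Gould–Hopper
polynomials:
`xⁿ/γ_μ(n) = ∑_{k=0}^{⌊n/(d+1)⌋} ((-a)^k/(k!(n-(d+1)k)!)) Q_{n-(d+1)k}^{(d+1)}(x,a,μ)`. -/
theorem gghQ_inversion
    (d : ℕ) (hd : 1 ≤ d) (a : ℂ) (μ : ℝ) (hμ : -(1/2) < μ)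
    (n : ℕ) (x : ℂ) :
    x ^ n / ((dunklGamma μ n : ℝ) : ℂ) =
      ∑ k ∈ Finset.range (n / (d + 1) + 1),
        (-a) ^ k /
            ((Nat.factorial k : ℂ) * (Nat.factorial (n - (d + 1) * k) : ℂ)) *
          gghQ d a μ (n - (d + 1) * k) x := by
  set N := n / (d + 1) with hN
  -- step 1: rewrite each term of the RHS
  have step1 : ∀ k ∈ range (N + 1),
      (-a) ^ k / ((Nat.factorial k : ℂ) * (Nat.factorial (n - (d + 1) * k) : ℂ)) *
        gghQ d a μ (n - (d + 1) * k) x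
      = ∑ j ∈ range (N - k + 1),
          (-a) ^ k * a ^ j / ((Nat.factorial k : ℂ) * (Nat.factorial j : ℂ)) *
            (x ^ (n - (d + 1) * (k + j)) /
              ((dunklGamma μ (n - (d + 1) * (k + j)) : ℝ) : ℂ)) := by
    intro k hk
    have hk' : k ≤ N := Nat.lt_succ_iff.mp (mem_range.mp hk)
    have hkn : (d + 1) * k ≤ n := by
      rw [mul_comm]
      exact (Nat.le_div_iff_mul_le (Nat.succ_pos d)).mp hk'
    have hdiv : (n - (d + 1) * k) / (d + 1) = N - k := Nat.sub_mul_div n (d+1) k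
    have hsub : ∀ j : ℕ, n - (d + 1) * k - (d + 1) * j = n - (d + 1) * (k + j) := by
      intro j; rw [Nat.sub_sub, ← Nat.mul_add]
    rw [gghQ, hdiv]
    rw [Finset.mul_sum, Finset.mul_sum]
    apply Finset.sum_congr rfl
    intro j hj
    rw [hsub j]
    have h1 : (Nat.factorial k : ℂ) ≠ 0 := Nat.cast_ne_zero.2 k.factorial_ne_zero
    have h2 : (Nat.factorial (n - (d+1)*k) : ℂ) ≠ 0 :=
      Nat.cast_ne_zero.2 (n - (d+1)*k).factorial_ne_zero
    have h3 : (Nat.factorial j : ℂ) ≠ 0 := Nat.cast_ne_zero.2 j.factorial_ne_zero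
    have h4 : ((dunklGamma μ (n - (d+1)*(k+j)) : ℝ) : ℂ) ≠ 0 :=
      Complex.ofReal_ne_zero.2 (ne_of_gt (dunklGamma_pos μ hμ _))
    field_simp
  rw [Finset.sum_congr rfl step1, sum_triangle' N
    (fun k j => (-a) ^ k * a ^ j / ((Nat.factorial k : ℂ) * (Nat.factorial j : ℂ)) *
      (x ^ (n - (d + 1) * (k + j)) / ((dunklGamma μ (n - (d + 1) * (k + j)) : ℝ) : ℂ)))]
  -- step 2: inner binomial sums collapse
  have step2 : ∀ m ∈ range (N + 1),
      (∑ k ∈ range (m + 1),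
        (-a) ^ k * a ^ (m - k) / ((Nat.factorial k : ℂ) * (Nat.factorial (m-k) : ℂ)) *
          (x ^ (n - (d + 1) * (k + (m - k))) /
            ((dunklGamma μ (n - (d + 1) * (k + (m - k))) : ℝ) : ℂ)))
      = if m = 0 then x ^ n / ((dunklGamma μ n : ℝ) : ℂ) else 0 := by
    intro m hm
    have hkm : ∀ k ∈ range (m + 1), k + (m - k) = m := by
      intro k hk
      have : k ≤ m := Nat.lt_succ_iff.mp (mem_range.mp hk)
      omega
    calc (∑ k ∈ range (m + 1),
        (-a) ^ k * a ^ (m - k) / ((Nat.factorial k : ℂ) * (Nat.factorial (m-k) : ℂ)) *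
          (x ^ (n - (d + 1) * (k + (m - k))) /
            ((dunklGamma μ (n - (d + 1) * (k + (m - k))) : ℝ) : ℂ)))
        = (∑ k ∈ range (m + 1),
            (-a) ^ k * a ^ (m - k) / ((Nat.factorial k : ℂ) * (Nat.factorial (m-k) : ℂ))) *
          (x ^ (n - (d + 1) * m) / ((dunklGamma μ (n - (d + 1) * m) : ℝ) : ℂ)) := by
          rw [Finset.sum_mul]
          apply Finset.sum_congr rfl
          intro k hk
          rw [hkm k hk]
      _ = _ := by
          rw [binom_sum']
          split_ifs with h0
          · subst h0; simp
          · simp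
  rw [Finset.sum_congr rfl step2, Finset.sum_ite_eq' (range (N+1)) 0
    (fun _ => x ^ n / ((dunklGamma μ n : ℝ) : ℂ))]
  simp
end

section
/- Let d \ge 1 be an integer, a \in \mathbb{C}, \mu > -1/2, and \alpha \in \mathbb{C} with \alpha \ne 0. Then the duplication formula for the generalized Gould–Hopper polynomials holds: for all n \in \mathbb{N} and all x, Q_n^{(d+1)}(\alpha x, a, \mu) = n! \sum_{k=0}^{\lfloor n/(d+1) \rfloor} (\alpha^{n-k(d+1)} (1-\alpha^{d+1})^k a^k / ((n-k(d+1))! \, k!)) \, Q_{n-k(d+1)}^{(d+1)}(x, a, \mu). -/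
open Finset

lemma tri_sum {M : Type*} [AddCommMonoid M] (N : ℕ) (f : ℕ → ℕ → M) :
    ∑ j ∈ range (N+1), ∑ k ∈ range (j+1), f k (j-k)
      = ∑ k ∈ range (N+1), ∑ l ∈ range (N-k+1), f k l := by
  induction N with
  | zero => simp
  | succ N ih =>
    rw [Finset.sum_range_succ, ih, Finset.sum_range_succ (fun k => ∑ l ∈ range (N+1-k+1), f k l),
      Finset.sum_range_succ (fun k => f k (N+1-k))]
    have h1 : ∀ k ∈ range (N+1), ∑ l ∈ range (N+1-k+1), f k l
        = ∑ l ∈ range (N-k+1), f k l + f k (N+1-k) := by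
      intro k hk
      have hk' : k ≤ N := Nat.lt_succ_iff.mp (mem_range.mp hk)
      have h2 : N+1-k+1 = (N-k+1)+1 := by omega
      have h3 : N - k + 1 = N + 1 - k := by omega
      rw [h2, Finset.sum_range_succ, h3]
    rw [Finset.sum_congr rfl h1, Finset.sum_add_distrib]
    simp [add_assoc]

set_option maxHeartbeats 1000000 in
/-- duplication formula for the generalized Gould–Hopper
polynomials:
`Q_n^{(d+1)}(αx,a,μ) = n! ∑_{k=0}^{⌊n/(d+1)⌋}
  (α^{n-k(d+1)} (1-α^{d+1})^k a^k / ((n-k(d+1))! k!)) Q_{n-k(d+1)}^{(d+1)}(x,a,μ)`. -/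
theorem gghQ_duplication
    (d : ℕ) (hd : 1 ≤ d) (a : ℂ) (μ : ℝ) (hμ : -(1/2) < μ)
    (α : ℂ) (hα : α ≠ 0) (n : ℕ) (x : ℂ) :
    gghQ d a μ n (α * x) =
      (Nat.factorial n : ℂ) *
        ∑ k ∈ Finset.range (n / (d + 1) + 1),
          α ^ (n - k * (d + 1)) * (1 - α ^ (d + 1)) ^ k * a ^ k /
              ((Nat.factorial (n - k * (d + 1)) : ℂ) * (Nat.factorial k : ℂ)) *
            gghQ d a μ (n - k * (d + 1)) x := by
  have hγ : ∀ N : ℕ, ((dunklGamma μ N : ℝ) : ℂ) ≠ 0 := by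
    intro N
    have hpos : (0:ℝ) < dunklGamma μ N := by
      unfold dunklGamma
      have h1 : (0:ℝ) < ∏ i ∈ Finset.range (N / 2 + N % 2), (μ + 1 / 2 + i) := by
        apply Finset.prod_pos
        intro i _
        have : (0:ℝ) ≤ (i:ℝ) := Nat.cast_nonneg i
        have : -(1/2 : ℝ) < μ := hμ
        linarith
      have h2 : (0:ℝ) < (Nat.factorial (N / 2) : ℝ) := by positivity
      positivity
    exact_mod_cast ne_of_gt hpos
  have hfact : ∀ k : ℕ, ((Nat.factorial k : ℕ) : ℂ) ≠ 0 :=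
    fun k => Nat.cast_ne_zero.mpr (Nat.factorial_ne_zero k)
  set N := n / (d+1) with hN
  set F : ℕ → ℕ → ℂ := fun k l =>
    (1 - α^(d+1))^k * α^(n-(d+1)*k) * (a^k * a^l) * x^(n-(d+1)*(k+l)) /
      (((Nat.factorial k : ℂ) * (Nat.factorial l : ℂ)) *
        ((dunklGamma μ (n-(d+1)*(k+l)) : ℝ) : ℂ)) with hF
  have hle : ∀ j, j ≤ N → (d+1)*j ≤ n := by
    intro j hj
    have h1 : N * (d+1) ≤ n := Nat.div_mul_le_self n (d+1)
    calc (d+1)*j ≤ (d+1)*N := Nat.mul_le_mul_left _ hj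
    _ = N*(d+1) := Nat.mul_comm _ _
    _ ≤ n := h1
  -- LHS
  have hL : ∑ j ∈ range (N+1),
      a ^ j * (α*x) ^ (n - (d + 1) * j) /
        ((Nat.factorial j : ℂ) * ((dunklGamma μ (n - (d + 1) * j) : ℝ) : ℂ))
      = ∑ j ∈ range (N+1), ∑ k ∈ range (j+1), F k (j-k) := by
    refine Finset.sum_congr rfl (fun j hj => ?_)
    have hjN : j ≤ N := Nat.lt_succ_iff.mp (mem_range.mp hj)
    have hjn : (d+1)*j ≤ n := hle j hjN
    have hone : ((1:ℂ)) = ∑ k ∈ range (j+1),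
        (1-α^(d+1))^k * (α^(d+1))^(j-k) * (Nat.choose j k : ℂ) := by
      have h := add_pow (1-α^(d+1)) (α^(d+1)) j
      simp only [sub_add_cancel, one_pow] at h
      exact h
    calc a ^ j * (α*x) ^ (n - (d + 1) * j) /
        ((Nat.factorial j : ℂ) * ((dunklGamma μ (n - (d + 1) * j) : ℝ) : ℂ))
        = (∑ k ∈ range (j+1), (1-α^(d+1))^k * (α^(d+1))^(j-k) * (Nat.choose j k : ℂ)) *
          (a ^ j * (α*x) ^ (n - (d + 1) * j) /
            ((Nat.factorial j : ℂ) * ((dunklGamma μ (n - (d + 1) * j) : ℝ) : ℂ))) := by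
          rw [← hone, one_mul]
    _ = ∑ k ∈ range (j+1), F k (j-k) := by
        rw [Finset.sum_mul]
        refine Finset.sum_congr rfl (fun k hk => ?_)
        have hkj : k ≤ j := Nat.lt_succ_iff.mp (mem_range.mp hk)
        have hjfac : ((Nat.factorial j : ℕ) : ℂ)
            = (Nat.choose j k : ℂ) * (Nat.factorial k : ℂ) * (Nat.factorial (j-k) : ℂ) := by
          rw_mod_cast [← Nat.choose_mul_factorial_mul_factorial hkj]
        have hC : ((Nat.choose j k : ℕ) : ℂ) ≠ 0 :=
          Nat.cast_ne_zero.mpr (Nat.choose_pos hkj).ne'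
        have hsplit : (d+1)*k + (d+1)*(j-k) = (d+1)*j := by
          rw [← Nat.mul_add, Nat.add_sub_cancel' hkj]
        have hpow : (α^(d+1))^(j-k) * α^(n-(d+1)*j) = α^(n-(d+1)*k) := by
          rw [← pow_mul, ← pow_add]
          congr 1
          omega
        have hkk : k + (j-k) = j := Nat.add_sub_cancel' hkj
        have hx : (α*x) ^ (n - (d + 1) * j) = α^(n-(d+1)*j) * x^(n-(d+1)*j) := mul_pow _ _ _
        simp only [hF, hkk]
        rw [hx, hjfac, ← hpow, pow_add a k (j-k) |>.symm, hkk]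
        field_simp [hC, hγ, hfact]
    _ = ∑ k ∈ range (j+1), F k (j-k) := by rfl
  -- RHS
  have hR : ∑ k ∈ range (N+1),
      α ^ (n - k * (d + 1)) * (1 - α ^ (d + 1)) ^ k * a ^ k /
          ((Nat.factorial (n - k * (d + 1)) : ℂ) * (Nat.factorial k : ℂ)) *
        gghQ d a μ (n - k * (d + 1)) x
      = ∑ k ∈ range (N+1), ∑ l ∈ range (N-k+1), F k l := by
    refine Finset.sum_congr rfl (fun k hk => ?_)
    have hkN : k ≤ N := Nat.lt_succ_iff.mp (mem_range.mp hk)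
    have hkn : (d+1)*k ≤ n := hle k hkN
    have hcomm : n - k*(d+1) = n - (d+1)*k := by rw [Nat.mul_comm]
    have hdiv : (n - (d+1)*k)/(d+1) = N - k := by
      rw [hN, ← Nat.sub_mul_div]
    rw [hcomm, gghQ, hdiv, Finset.mul_sum, Finset.mul_sum]
    refine Finset.sum_congr rfl (fun l hl => ?_)
    have hidx : n - (d+1)*k - (d+1)*l = n - (d+1)*(k+l) := by
      rw [Nat.sub_sub, ← Nat.mul_add]
    simp only [hF, hidx]
    have h1 := hfact (n - (d+1)*k)
    have h2 := hfact k
    have h3 := hfact l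
    have h4 := hγ (n - (d+1)*(k+l))
    field_simp
  rw [gghQ, hL, hR, tri_sum]
end

section
/- Let \mu_2 > \mu_1 > -1/2 and define the normalized generalized Hermite polynomials \hat{H}_n^{\mu}(x) = (\gamma_\mu(n)/(n! \lfloor n/2 \rfloor!)) H_n^{\mu}(x), where H_n^{\mu}(x) = n! \sum_{k=0}^{\lfloor n/2 \rfloor} (-1)^k (2x)^{n-2k} / (k! \gamma_\mu(n-2k)). Then for all n \in \mathbb{N} and all x, \hat{H}_n^{\mu_2}(x) = \sum_{k=0}^{\lfloor n/2 \rfloor} ((-1)^k 4^k / k!) (\mu_2 - \mu_1)_k \, \hat{H}_{n-2k}^{\mu_1}(x). -/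
open Finset Polynomial

lemma descPoch_real (x : ℝ) : ∀ m : ℕ, (descPochhammer ℤ m).smeval x = ∏ i ∈ range m, (x - i)
  | 0 => by simp [descPochhammer_zero, Polynomial.smeval_one]
  | m+1 => by
    rw [descPochhammer_succ_right, Polynomial.smeval_mul, descPoch_real x m, prod_range_succ]
    congr 1
    rw [Polynomial.smeval_sub, Polynomial.smeval_X, Polynomial.smeval_natCast]
    simp

lemma vand (a b : ℝ) (m : ℕ) :
    ∏ i ∈ range m, (a + b - i)
      = ∑ k ∈ range (m+1), (m.choose k : ℝ) *
          ((∏ i ∈ range k, (a - i)) * ∏ i ∈ range (m-k), (b - i)) := by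
  have h := Ring.descPochhammer_smeval_add (R := ℝ) (r := a) (s := b) m (Commute.all a b)
  rw [Finset.Nat.sum_antidiagonal_eq_sum_range_succ_mk] at h
  rw [← descPoch_real]
  rw [h]
  refine sum_congr rfl fun k hk => ?_
  rw [descPoch_real, descPoch_real]

lemma neg_prod (c : ℝ) (m : ℕ) :
    ∏ i ∈ range m, (-c - (i:ℝ)) = (-1:ℝ)^m * ∏ i ∈ range m, (c + i) := by
  calc ∏ i ∈ range m, (-c - (i:ℝ)) = ∏ i ∈ range m, (-1:ℝ) * (c + i) := by
        refine prod_congr rfl fun i _ => by ring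
    _ = (-1:ℝ)^m * ∏ i ∈ range m, (c + i) := by
        rw [prod_mul_distrib, prod_const, card_range]

/-- Rising-factorial Chu–Vandermonde. -/
lemma vandA (a b : ℝ) (m : ℕ) :
    ∏ i ∈ range m, (a + b + i)
      = ∑ k ∈ range (m+1), (m.choose k : ℝ) *
          ((∏ i ∈ range k, (a + i)) * ∏ i ∈ range (m-k), (b + i)) := by
  have h := vand (-a) (-b) m
  have hL : ∏ i ∈ range m, (-a + -b - (i:ℝ)) = (-1:ℝ)^m * ∏ i ∈ range m, (a + b + i) := by
    rw [← neg_prod (a+b) m]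
    exact prod_congr rfl fun i _ => by ring
  rw [hL] at h
  have hR : ∑ k ∈ range (m+1), (m.choose k : ℝ) *
        ((∏ i ∈ range k, (-a - i)) * ∏ i ∈ range (m-k), (-b - i))
      = (-1:ℝ)^m * ∑ k ∈ range (m+1), (m.choose k : ℝ) *
          ((∏ i ∈ range k, (a + i)) * ∏ i ∈ range (m-k), (b + i)) := by
    rw [mul_sum]
    refine sum_congr rfl fun k hk => ?_
    rw [mem_range] at hk
    rw [neg_prod, neg_prod]
    have : (-1:ℝ)^k * (-1:ℝ)^(m-k) = (-1:ℝ)^m := by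
      rw [← pow_add]; congr 1; omega
    calc (m.choose k : ℝ) * ((-1:ℝ)^k * (∏ i ∈ range k, (a+i)) *
            ((-1:ℝ)^(m-k) * ∏ i ∈ range (m-k), (b+i)))
        = ((-1:ℝ)^k * (-1:ℝ)^(m-k)) * ((m.choose k : ℝ) *
            ((∏ i ∈ range k, (a+i)) * ∏ i ∈ range (m-k), (b+i))) := by ring
      _ = _ := by rw [this]
  rw [hR] at h
  have hne : ((-1:ℝ)^m) ≠ 0 := by positivity
  exact mul_left_cancel₀ hne h

lemma tri (N : ℕ) (f : ℕ → ℕ → ℝ) :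
    ∑ k ∈ range (N+1), ∑ j ∈ range (N - k + 1), f k j
      = ∑ m ∈ range (N+1), ∑ k ∈ range (m+1), f k (m - k) := by
  rw [Finset.sum_sigma', Finset.sum_sigma']
  refine sum_nbij' (fun x => ⟨x.1 + x.2, x.1⟩) (fun x => ⟨x.2, x.1 - x.2⟩) ?_ ?_ ?_ ?_ ?_
  · rintro ⟨a, b⟩ h
    simp only [Finset.mem_sigma, Finset.mem_range] at h ⊢
    omega
  · rintro ⟨a, b⟩ h
    simp only [Finset.mem_sigma, Finset.mem_range] at h ⊢
    omega
  · rintro ⟨a, b⟩ h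
    simp only [Finset.mem_sigma, Finset.mem_range] at h
    simp only [Nat.add_sub_cancel_left]
  · rintro ⟨a, b⟩ h
    simp only [Finset.mem_sigma, Finset.mem_range] at h
    have : b + (a - b) = a := by omega
    simp [this]
  · rintro ⟨a, b⟩ h
    simp only [Finset.mem_sigma, Finset.mem_range] at h
    simp only [Nat.add_sub_cancel_left]

/-- The generalized Hermite (Szegő–Chihara) polynomial
`H_n^μ(x) = n! ∑_{k=0}^{⌊n/2⌋} (-1)^k (2x)^{n-2k} / (k! γ_μ(n-2k))`. -/
noncomputable def genHermite (μ : ℝ) (n : ℕ) (x : ℝ) : ℝ :=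
  (Nat.factorial n : ℝ) *
    ∑ k ∈ Finset.range (n / 2 + 1),
      (-1 : ℝ) ^ k * (2 * x) ^ (n - 2 * k) /
        ((Nat.factorial k : ℝ) * dunklGamma μ (n - 2 * k))

/-- The normalized generalized Hermite polynomial
`Ĥ_n^μ(x) = (γ_μ(n)/(n! ⌊n/2⌋!)) H_n^μ(x)`. -/
noncomputable def genHermiteNorm (μ : ℝ) (n : ℕ) (x : ℝ) : ℝ :=
  dunklGamma μ n / ((Nat.factorial n : ℝ) * (Nat.factorial (n / 2) : ℝ)) *
    genHermite μ n x

lemma pochProd_pos (μ : ℝ) (h : -(1/2) < μ) (m : ℕ) :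
    0 < ∏ i ∈ range m, (μ + 1/2 + (i:ℝ)) := by
  refine prod_pos fun i _ => ?_
  have : (0:ℝ) ≤ i := Nat.cast_nonneg i
  linarith

lemma genHermiteNorm_eq (μ : ℝ) (h : -(1/2) < μ) (n : ℕ) (x : ℝ) :
    genHermiteNorm μ n x
      = ∑ k ∈ range (n/2 + 1),
          (-1:ℝ)^k * 4^k / ((Nat.factorial k : ℝ) * (Nat.factorial (n/2 - k) : ℝ))
            * (∏ i ∈ range k, (μ + 1/2 + ((n/2 - k + n % 2 + i : ℕ) : ℝ)))
            * (2*x)^(n - 2*k) := by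
  rw [genHermiteNorm, genHermite, ← mul_assoc, Finset.mul_sum]
  refine sum_congr rfl fun k hk => ?_
  rw [mem_range] at hk
  have hk' : k ≤ n/2 := by omega
  have h2k : 2*k ≤ n := by omega
  have hdiv : (n - 2*k)/2 = n/2 - k := by omega
  have hmod : (n - 2*k) % 2 = n % 2 := by omega
  have hsplit : n/2 + n%2 = (n/2 - k + n%2) + k := by omega
  have hg2 : dunklGamma μ (n - 2*k)
      = 2^(n-2*k) * (Nat.factorial (n/2 - k) : ℝ) *
          ∏ i ∈ range (n/2 - k + n%2), (μ + 1/2 + i) := by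
    rw [dunklGamma, hdiv, hmod]
  have hg1 : dunklGamma μ n
      = 2^n * (Nat.factorial (n/2) : ℝ) *
          ((∏ i ∈ range (n/2 - k + n%2), (μ + 1/2 + i)) *
            ∏ i ∈ range k, (μ + 1/2 + ((n/2 - k + n%2 + i : ℕ) : ℝ))) := by
    rw [dunklGamma, hsplit, prod_range_add]
  rw [hg1, hg2]
  have hQ : (0:ℝ) < ∏ i ∈ range (n/2 - k + n%2), (μ + 1/2 + i) := pochProd_pos μ h _
  have hfn : ((Nat.factorial n : ℝ)) ≠ 0 := Nat.cast_ne_zero.mpr (Nat.factorial_ne_zero n)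
  have hfp : ((Nat.factorial (n/2) : ℝ)) ≠ 0 := Nat.cast_ne_zero.mpr (Nat.factorial_ne_zero _)
  have hfk : ((Nat.factorial k : ℝ)) ≠ 0 := Nat.cast_ne_zero.mpr (Nat.factorial_ne_zero _)
  have hfpk : ((Nat.factorial (n/2 - k) : ℝ)) ≠ 0 := Nat.cast_ne_zero.mpr (Nat.factorial_ne_zero _)
  have hpow : (2:ℝ)^(n-2*k) * 4^k = 2^n := by
    have : (4:ℝ) = 2^2 := by norm_num
    rw [this, ← pow_mul, ← pow_add]
    congr 1
    omega
  have h2 : ((2:ℝ)^(n-2*k)) ≠ 0 := by positivity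
  have hQ' : (∏ i ∈ range (n/2 - k + n%2), (μ + 1/2 + (i:ℝ))) ≠ 0 := ne_of_gt hQ
  rw [← hpow]
  generalize (∏ i ∈ range (n/2 - k + n%2), (μ + 1/2 + (i:ℝ))) = Q at hQ'
  generalize (∏ i ∈ range k, (μ + 1/2 + ((n/2 - k + n % 2 + i : ℕ) : ℝ))) = T
  generalize (2*x)^(n - 2*k) = y
  field_simp

/-- connection formula between normalized generalized Hermite
polynomial sets:
`Ĥ_n^{μ₂}(x) = ∑_{k=0}^{⌊n/2⌋} ((-1)^k 4^k / k!) (μ₂-μ₁)_k Ĥ_{n-2k}^{μ₁}(x)`. -/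
theorem genHermiteNorm_connection
    (μ1 μ2 : ℝ) (h1 : -(1/2) < μ1) (h2 : μ1 < μ2)
    (n : ℕ) (x : ℝ) :
    genHermiteNorm μ2 n x =
      ∑ k ∈ Finset.range (n / 2 + 1),
        (-1 : ℝ) ^ k * 4 ^ k / (Nat.factorial k : ℝ) *
          (∏ i ∈ Finset.range k, (μ2 - μ1 + i)) *
          genHermiteNorm μ1 (n - 2 * k) x := by
  have h2' : -(1/2) < μ2 := lt_trans h1 h2
  rw [genHermiteNorm_eq μ2 h2' n x]
  have step1 : ∑ k ∈ Finset.range (n / 2 + 1),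
        (-1 : ℝ) ^ k * 4 ^ k / (Nat.factorial k : ℝ) *
          (∏ i ∈ Finset.range k, (μ2 - μ1 + i)) *
          genHermiteNorm μ1 (n - 2 * k) x
      = ∑ k ∈ range (n/2 + 1), ∑ j ∈ range (n/2 - k + 1),
          (-1 : ℝ) ^ k * 4 ^ k / (Nat.factorial k : ℝ) *
            (∏ i ∈ Finset.range k, (μ2 - μ1 + i)) *
            ((-1:ℝ)^j * 4^j / ((Nat.factorial j : ℝ) * (Nat.factorial (n/2 - k - j) : ℝ))
              * (∏ i ∈ range j, (μ1 + 1/2 + ((n/2 - k - j + n % 2 + i : ℕ) : ℝ)))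
              * (2*x)^(n - 2*k - 2*j)) := by
    refine sum_congr rfl fun k hk => ?_
    rw [mem_range] at hk
    have hdiv : (n - 2*k)/2 = n/2 - k := by omega
    have hmod : (n - 2*k) % 2 = n % 2 := by omega
    rw [genHermiteNorm_eq μ1 h1 (n-2*k) x, hdiv, hmod, Finset.mul_sum]
  rw [step1, tri]
  refine sum_congr rfl fun m hm => ?_
  rw [mem_range] at hm
  have hm' : m ≤ n/2 := by omega
  have hprod2 : ∏ i ∈ range m, (μ2 + 1/2 + ((n/2 - m + n % 2 + i : ℕ) : ℝ))
      = ∏ i ∈ range m, ((μ2 - μ1) + (μ1 + 1/2 + ((n/2 - m + n % 2 : ℕ) : ℝ)) + i) := by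
    refine prod_congr rfl fun i _ => ?_
    push_cast
    ring
  rw [hprod2]
  rw [vandA (μ2 - μ1) (μ1 + 1/2 + ((n/2 - m + n % 2 : ℕ) : ℝ)) m]
  simp only [Finset.mul_sum, Finset.sum_mul]
  refine sum_congr rfl fun k hk => ?_
  rw [mem_range] at hk
  have hk' : k ≤ m := by omega
  have e1 : n/2 - k - (m - k) = n/2 - m := by omega
  have e2 : n - 2*k - 2*(m-k) = n - 2*m := by omega
  have e3 : n/2 - k - (m-k) + n%2 = n/2 - m + n%2 := by omega
  rw [e2, e3, e1]
  have hprod1 : ∏ i ∈ range (m-k), (μ1 + 1/2 + ((n/2 - m + n % 2 + i : ℕ) : ℝ))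
      = ∏ i ∈ range (m-k), ((μ1 + 1/2 + ((n/2 - m + n % 2 : ℕ) : ℝ)) + i) := by
    refine prod_congr rfl fun i _ => ?_
    push_cast
    ring
  rw [hprod1]
  have hC : ((m.choose k : ℕ) : ℝ) * (Nat.factorial k : ℝ) * (Nat.factorial (m-k) : ℝ)
      = (Nat.factorial m : ℝ) := by
    exact_mod_cast congrArg (Nat.cast (R := ℝ)) (Nat.choose_mul_factorial_mul_factorial hk')
  have hsign : (-1:ℝ)^k * (-1:ℝ)^(m-k) = (-1:ℝ)^m := by
    rw [← pow_add]; congr 1; omega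
  have h4 : (4:ℝ)^k * (4:ℝ)^(m-k) = (4:ℝ)^m := by
    rw [← pow_add]; congr 1; omega
  have hfk : ((Nat.factorial k : ℝ)) ≠ 0 := Nat.cast_ne_zero.mpr (Nat.factorial_ne_zero _)
  have hfmk : ((Nat.factorial (m-k) : ℝ)) ≠ 0 := Nat.cast_ne_zero.mpr (Nat.factorial_ne_zero _)
  have hfm : ((Nat.factorial m : ℝ)) ≠ 0 := Nat.cast_ne_zero.mpr (Nat.factorial_ne_zero _)
  have hfq : ((Nat.factorial (n/2 - m) : ℝ)) ≠ 0 := Nat.cast_ne_zero.mpr (Nat.factorial_ne_zero _)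
  generalize (∏ i ∈ range k, (μ2 - μ1 + (i:ℝ))) = u
  generalize (∏ i ∈ range (m-k), ((μ1 + 1/2 + ((n/2 - m + n % 2 : ℕ) : ℝ)) + (i:ℝ))) = v
  generalize (2*x)^(n - 2*m) = y
  have hs4 : (-1:ℝ)^k * (-1:ℝ)^(m-k) * ((4:ℝ)^k * (4:ℝ)^(m-k)) = (-1:ℝ)^m * (4:ℝ)^m := by
    rw [hsign, h4]
  field_simp
  linear_combination (u*v*y*((-1:ℝ)^m*4^m))*hC
    - (u*v*y*((Nat.factorial m : ℝ)))*hs4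
end
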